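/- Let f: S² → S² be a finite-to-one open continuous surjective map (branched covering) of a topological 2-sphere and J ⊆ S² a Jordan curve. Then f⁻¹(J) has finitely many connected components, and f maps each component onto J. -/

import Mathlib

noncomputable section

/-- `J` is a Jordan curve: the homeomorphic image of a circle. -/
def IsJordanCurve {X : Type*} [TopologicalSpace X] (J : Set X) : Prop :=
  ∃ φ : (Metric.sphere (0 : EuclideanSpace ℝ (Fin 2)) 1) → X,
    Continuous φ ∧ Function.Injective φ ∧ Set.range φ = J

/-- Let `f : S² → S²` be a branched covering map (continuous, open, surjective and
finite-to-one) of a topological 2-sphere, and `J ⊆ S²` a Jordan curve.  Then `f⁻¹(J)`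
has finitely many connected components, and `f` maps each component onto `J`. -/
theorem stmt10 {X : Type*} [TopologicalSpace X]
    (hX : Nonempty (X ≃ₜ Metric.sphere (0 : EuclideanSpace ℝ (Fin 3)) 1))
    (f : X → X) (hc : Continuous f) (ho : IsOpenMap f) (hs : Function.Surjective f)
    (hfin : ∀ y : X, (f ⁻¹' {y}).Finite)
    (J : Set X) (hJ : IsJordanCurve J) :
    {C : Set X | ∃ x ∈ f ⁻¹' J, C = connectedComponentIn (f ⁻¹' J) x}.Finite ∧
    ∀ C ∈ {C : Set X | ∃ x ∈ f ⁻¹' J, C = connectedComponentIn (f ⁻¹' J) x},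
      f '' C = J := by
  classical
  obtain ⟨e⟩ := hX
  haveI : CompactSpace X := e.symm.compactSpace
  haveI : T2Space X := e.isEmbedding.t2Space
  obtain ⟨φ, hφc, hφi, hφr⟩ := hJ
  -- the circle is connected
  have hrank : 1 < Module.rank ℝ (EuclideanSpace ℝ (Fin 2)) := by
    have h2 : Module.finrank ℝ (EuclideanSpace ℝ (Fin 2)) = 2 := finrank_euclideanSpace_fin
    have := Module.finrank_eq_rank ℝ (EuclideanSpace ℝ (Fin 2))
    rw [h2] at this
    rw [← this]
    exact_mod_cast one_lt_two
  have hsph : IsConnected (Metric.sphere (0 : EuclideanSpace ℝ (Fin 2)) 1) :=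
    isConnected_sphere hrank 0 zero_le_one
  haveI : ConnectedSpace (Metric.sphere (0 : EuclideanSpace ℝ (Fin 2)) 1) :=
    Subtype.connectedSpace hsph
  have hJconn : IsConnected J := hφr ▸ isConnected_range hφc
  have hJcomp : IsCompact J := hφr ▸ isCompact_range hφc
  set K : Set X := f ⁻¹' J with hK
  have hKcl : IsClosed K := hJcomp.isClosed.preimage hc
  have hKcomp : IsCompact K := hKcl.isCompact
  haveI : CompactSpace ↥K := isCompact_iff_compactSpace.mp hKcomp
  haveI : ConnectedSpace ↥J := Subtype.connectedSpace hJconn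
  -- every nonempty clopen subset of K (in the subspace topology) maps onto J
  have clopen_onto : ∀ Z : Set ↥K, IsClopen Z → Z.Nonempty → f '' ((↑) '' Z) = J := by
    intro Z hZ hZne
    obtain ⟨V, hVopen, hVZ⟩ := isOpen_induced_iff.mp hZ.2
    have hcoeZ : ((↑) : ↥K → X) '' Z = K ∩ V := by
      rw [← hVZ, Subtype.image_preimage_coe]
    -- the image is open in J
    have himg : f '' ((↑) '' Z) = (f '' V) ∩ J := by
      rw [hcoeZ]
      ext y
      constructor
      · rintro ⟨x, ⟨hxK, hxV⟩, rfl⟩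
        exact ⟨⟨x, hxV, rfl⟩, hxK⟩
      · rintro ⟨⟨x, hxV, rfl⟩, hyJ⟩
        exact ⟨x, ⟨hyJ, hxV⟩, rfl⟩
    -- the image is compact, hence closed in X
    have hZcomp : IsCompact (((↑) : ↥K → X) '' Z) :=
      (hZ.1.isCompact).image continuous_subtype_val
    have hAcomp : IsCompact (f '' ((↑) '' Z)) := hZcomp.image hc
    have hAcl : IsClosed (f '' ((↑) '' Z)) := hAcomp.isClosed
    have hAsubJ : f '' ((↑) '' Z) ⊆ J := by
      rw [himg]; exact Set.inter_subset_right
    -- transfer to the subtype ↥J, where the image is clopen and nonempty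
    set A' : Set ↥J := ((↑) : ↥J → X) ⁻¹' (f '' ((↑) '' Z)) with hA'
    have hA'clopen : IsClopen A' := by
      constructor
      · exact hAcl.preimage continuous_subtype_val
      · rw [hA', himg, Set.preimage_inter]
        have : (((↑) : ↥J → X) ⁻¹' J) = Set.univ := by
          ext a; simp [a.2]
        rw [this, Set.inter_univ]
        exact (ho V hVopen).preimage continuous_subtype_val
    have hA'ne : A'.Nonempty := by
      obtain ⟨z, hz⟩ := hZne
      have hmem : f (↑z) ∈ f '' ((↑) '' Z) := ⟨↑z, ⟨z, hz, rfl⟩, rfl⟩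
      exact ⟨⟨f ↑z, z.2⟩, hmem⟩
    have : A' = Set.univ := hA'clopen.eq_univ hA'ne
    apply Set.Subset.antisymm hAsubJ
    intro y hy
    have : (⟨y, hy⟩ : ↥J) ∈ A' := this ▸ Set.mem_univ _
    exact this
  -- main claim: each component of K maps onto J
  have key : ∀ x, x ∈ K → f '' connectedComponentIn K x = J := by
    intro x hx
    apply Set.Subset.antisymm
    · exact (Set.image_mono (f := f) (connectedComponentIn_subset K x)).trans
        (Set.image_preimage_subset f J)
    · intro y hy
      set p : ↥K := ⟨x, hx⟩
      set g : ↥K → X := fun a => f ↑a with hg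
      have hgc : Continuous g := hc.comp continuous_subtype_val
      -- Cantor intersection over clopen neighbourhoods of p
      set ι := { s : Set ↥K // IsClopen s ∧ p ∈ s }
      haveI : Nonempty ι := ⟨⟨Set.univ, isClopen_univ, Set.mem_univ p⟩⟩
      set t : ι → Set ↥K := fun Z => ↑Z ∩ g ⁻¹' {y} with ht
      have htd : Directed (· ⊇ ·) t := by
        intro Z₁ Z₂
        refine ⟨⟨Z₁.1 ∩ Z₂.1, Z₁.2.1.inter Z₂.2.1, Z₁.2.2, Z₂.2.2⟩,
          fun a ha => ⟨ha.1.1, ha.2⟩, fun a ha => ⟨ha.1.2, ha.2⟩⟩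
      have htn : ∀ Z : ι, (t Z).Nonempty := by
        intro Z
        have := clopen_onto Z.1 Z.2.1 ⟨p, Z.2.2⟩
        have hyZ : y ∈ f '' ((↑) '' Z.1) := this ▸ hy
        obtain ⟨w, ⟨a, haZ, rfl⟩, hfw⟩ := hyZ
        exact ⟨a, haZ, hfw⟩
      have htcl : ∀ Z : ι, IsClosed (t Z) := fun Z =>
        (Z.2.1.1).inter (isClosed_singleton.preimage hgc)
      have htc : ∀ Z : ι, IsCompact (t Z) := fun Z => (htcl Z).isCompact
      obtain ⟨a, ha⟩ :=
        IsCompact.nonempty_iInter_of_directed_nonempty_isCompact_isClosed t htd htn htc htcl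
      have haZ : ∀ Z : ι, a ∈ (Z : Set ↥K) := fun Z =>
        (Set.mem_iInter.mp ha Z).1
      have hay : g a = y := (Set.mem_iInter.mp ha ⟨Set.univ, isClopen_univ, Set.mem_univ p⟩).2
      have hacc : a ∈ connectedComponent p := by
        rw [connectedComponent_eq_iInter_isClopen p]
        exact Set.mem_iInter.mpr haZ
      rw [connectedComponentIn_eq_image hx]
      exact ⟨↑a, ⟨a, hacc, rfl⟩, hay⟩
  constructor
  · obtain ⟨y₀, hy₀⟩ := hJconn.nonempty
    apply Set.Finite.subset ((hfin y₀).image (fun z => connectedComponentIn K z))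
    rintro C ⟨x, hx, rfl⟩
    have hy₀mem : y₀ ∈ f '' connectedComponentIn K x := (key x hx).symm ▸ hy₀
    obtain ⟨z, hzC, hzy⟩ := hy₀mem
    exact ⟨z, hzy, (connectedComponentIn_eq hzC).symm⟩
  · rintro C ⟨x, hx, rfl⟩
    exact key x hx
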